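/- Let i ≥ 5, and suppose that for every j with 5 ≤ j ≤ i, the Fermat number N_j is the smallest positive integer m satisfying (c_j)^m ∈ L_{j−1}. Then the elements c_i · c_0 and a_i · a_0 are primitive elements of L_i, i.e., each has multiplicative order ∏_{j=0}^{i} N_j = 2^(2^(i+1)) − 1, where a_0 = c_0. -/

import Mathlib

set_option maxHeartbeats 1000000
set_option synthInstance.maxHeartbeats 400000


/-- The `j`-th Fermat number `N_j = 2^(2^j) + 1`. -/
def fermatN (j : ℕ) : ℕ := 2 ^ 2 ^ j + 1

/-- `conwayL c n` is the subfield `L_{n-1}` of the algebraic closure of `F_2`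
generated over `F_2` by `c 0, …, c (n-1)`; in particular `conwayL c 0 = ⊥ = F_2`. -/
noncomputable def conwayL (c : ℕ → AlgebraicClosure (ZMod 2)) (n : ℕ) :
    IntermediateField (ZMod 2) (AlgebraicClosure (ZMod 2)) :=
  IntermediateField.adjoin (ZMod 2) (c '' Set.Iio n)
namespace ConwayAux


noncomputable def W (n : ℕ) : ℕ := ∏ j ∈ Finset.range n, fermatN j

lemma fermatN_pos (j : ℕ) : 0 < fermatN j := by unfold fermatN; positivity

lemma W_succ (n : ℕ) : W (n + 1) = W n * fermatN n := Finset.prod_range_succ _ _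

lemma W_add_one (n : ℕ) : W n + 1 = 2 ^ 2 ^ n := by
  induction n with
  | zero => rfl
  | succ n ih =>
    have h2 : 2 ^ 2 ^ (n + 1) = (W n + 1) ^ 2 := by rw [pow_succ, pow_mul, ← ih]
    have hf : fermatN n = W n + 2 := by rw [fermatN, ← ih]
    rw [W_succ, h2, hf]; ring

lemma W_pos (n : ℕ) : 0 < W n := Finset.prod_pos fun j _ => fermatN_pos j

lemma not_three_dvd_fermatN {k : ℕ} (hk : 1 ≤ k) : ¬ (3 ∣ fermatN k) := by
  have h4 : (2:ℕ) ^ 2 ^ k = 4 ^ 2 ^ (k - 1) := by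
    rw [show (4:ℕ) = 2 ^ 2 by norm_num, ← pow_mul]
    congr 1
    conv_lhs => rw [← Nat.sub_add_cancel hk]
    rw [pow_succ, mul_comm]
  have h3 : (3:ℕ) ∣ 4 ^ 2 ^ (k - 1) - 1 := by
    simpa using Nat.sub_dvd_pow_sub_pow 4 1 (2 ^ (k - 1))
  have hM : 1 ≤ (4:ℕ) ^ 2 ^ (k - 1) := Nat.one_le_pow _ _ (by norm_num)
  rw [fermatN, h4]
  omega

lemma coprime_fermatN {j k : ℕ} (h : j ≠ k) : Nat.Coprime (fermatN j) (fermatN k) :=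
  Nat.coprime_fermatNumber_fermatNumber h

lemma coprime_fermatN_add_one {j k : ℕ} (hj : 1 ≤ j) (hjk : j < k) :
    Nat.Coprime (fermatN j) (fermatN k + 1) := by
  set d := Nat.gcd (fermatN j) (fermatN k + 1) with hd
  have hdj : d ∣ fermatN j := Nat.gcd_dvd_left _ _
  have hdk : d ∣ fermatN k + 1 := Nat.gcd_dvd_right _ _
  have hdodd : Odd d := ((Nat.odd_fermatNumber j).of_dvd_nat hdj)
  -- d divides 2^(2^k - 1) + 1
  have hsplit : fermatN k + 1 = 2 * (2 ^ (2 ^ k - 1) + 1) := by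
    have : (2:ℕ) ^ 2 ^ k = 2 * 2 ^ (2 ^ k - 1) := by
      conv_lhs => rw [show 2 ^ k = (2 ^ k - 1) + 1 by
        have := Nat.one_le_two_pow (n := k); omega]
      rw [pow_succ, mul_comm]
    rw [fermatN, this]; ring
  have hde : d ∣ 2 ^ (2 ^ k - 1) + 1 := by
    have h2 : Nat.Coprime d 2 := Nat.coprime_two_right.mpr hdodd
    exact (Nat.Coprime.dvd_of_dvd_mul_left h2 (by rwa [← hsplit]))
  have hd0 : 0 < d := Nat.gcd_pos_of_pos_left _ (fermatN_pos j)
  haveI : NeZero d := ⟨hd0.ne'⟩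
  -- in ZMod d
  have e1 : (2 : ZMod d) ^ 2 ^ (j + 1) = 1 := by
    have : ((fermatN j : ℕ) : ZMod d) = 0 := (ZMod.natCast_eq_zero_iff _ _).mpr hdj
    have h' : (2 : ZMod d) ^ 2 ^ j = -1 := by
      have := this
      rw [fermatN] at this; push_cast at this; linear_combination this
    rw [pow_succ, pow_mul, h']; ring
  have e2 : (2 : ZMod d) ^ (2 ^ (k + 1) - 2) = 1 := by
    have hcast : ((2 ^ (2 ^ k - 1) + 1 : ℕ) : ZMod d) = 0 :=
      (ZMod.natCast_eq_zero_iff _ _).mpr hde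
    have h' : (2 : ZMod d) ^ (2 ^ k - 1) = -1 := by
      push_cast at hcast; linear_combination hcast
    have harith : 2 ^ (k + 1) - 2 = (2 ^ k - 1) * 2 := by
      have := Nat.one_le_two_pow (n := k)
      have : (2:ℕ) ^ (k+1) = 2 * 2 ^ k := by rw [pow_succ, mul_comm]
      omega
    rw [harith, pow_mul, h']; ring
  have e3 : (2 : ZMod d) ^ Nat.gcd (2 ^ (j + 1)) (2 ^ (k + 1) - 2) = 1 :=
    pow_gcd_eq_one.mpr ⟨e1, e2⟩
  have hgcd : Nat.gcd (2 ^ (j + 1)) (2 ^ (k + 1) - 2) = 2 := by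
    have h1 : (2:ℕ) ^ (j + 1) = 2 * 2 ^ j := by rw [pow_succ, mul_comm]
    have h2 : (2:ℕ) ^ (k + 1) - 2 = 2 * (2 ^ k - 1) := by
      have : (2:ℕ) ^ (k+1) = 2 * 2 ^ k := by rw [pow_succ, mul_comm]
      omega
    rw [h1, h2, Nat.gcd_mul_left]
    have hodd : Odd ((2:ℕ) ^ k - 1) := by
      have h2k : 2 ∣ (2:ℕ) ^ k := dvd_pow_self 2 (by omega : k ≠ 0)
      have := Nat.one_le_two_pow (n := k)
      rw [Nat.odd_iff]; omega
    have : Nat.Coprime (2 ^ j) (2 ^ k - 1) :=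
      Nat.Coprime.pow_left _ (hodd.coprime_two_left)
    rw [this]
  rw [hgcd] at e3
  have hd3 : d ∣ 3 := by
    have : ((3 : ℕ) : ZMod d) = 0 := by push_cast; linear_combination e3
    exact (ZMod.natCast_eq_zero_iff _ _).mp this
  rcases (Nat.prime_three).eq_one_or_self_of_dvd d hd3 with h1 | h3
  · exact h1
  · exact absurd (h3 ▸ hdj) (not_three_dvd_fermatN hj)



open IntermediateField Polynomial

abbrev F2c := AlgebraicClosure (ZMod 2)

noncomputable def b (c : ℕ → F2c) (n : ℕ) : F2c := ∏ j ∈ Finset.range n, c j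

example : CharP F2c 2 := inferInstance

lemma two_eq_zero : (2 : F2c) = 0 := CharTwo.two_eq_zero

/-- The subfield of `2^(2^n)`-th power roots (fixed field of iterated Frobenius). -/
noncomputable def rootsSub (n : ℕ) : Subfield F2c where
  carrier := {x | x ^ 2 ^ 2 ^ n = x}
  mul_mem' := by
    intro a b ha hb
    simp only [Set.mem_setOf_eq] at *
    rw [mul_pow, ha, hb]
  one_mem' := one_pow _
  add_mem' := by
    intro a b ha hb
    simp only [Set.mem_setOf_eq] at *
    rw [add_pow_char_pow, ha, hb]
  zero_mem' := by
    simp only [Set.mem_setOf_eq]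
    exact zero_pow (by positivity)
  neg_mem' := by
    intro a ha
    simp only [Set.mem_setOf_eq] at *
    rw [CharTwo.neg_eq]; exact ha
  inv_mem' := by
    intro a ha
    simp only [Set.mem_setOf_eq] at *
    rw [inv_pow, ha]

/-- As an intermediate field of `F2 ⊆ F2c`. -/
noncomputable def rootsIF (n : ℕ) : IntermediateField (ZMod 2) F2c :=
  (rootsSub n).toIntermediateField (by
    intro r
    have hr : r = 0 ∨ r = 1 := by revert r; decide
    rcases hr with rfl | rfl
    · rw [map_zero]; exact (rootsSub n).zero_mem
    · rw [map_one]; exact (rootsSub n).one_mem)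

lemma mem_rootsIF {n : ℕ} {x : F2c} : x ∈ rootsIF n ↔ x ^ 2 ^ 2 ^ n = x := Iff.rfl

lemma rootsSet_finite (n : ℕ) : ({x : F2c | x ^ 2 ^ 2 ^ n = x}).Finite ∧
    ({x : F2c | x ^ 2 ^ 2 ^ n = x}).ncard ≤ 2 ^ 2 ^ n := by
  classical
  set q := 2 ^ 2 ^ n with hq
  have hq2 : 2 ≤ q := by
    have : 1 ≤ 2 ^ n := Nat.one_le_two_pow
    calc (2:ℕ) = 2 ^ 1 := rfl
    _ ≤ 2 ^ 2 ^ n := Nat.pow_le_pow_right (by norm_num) this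
  set P : Polynomial F2c := X ^ q - X with hP
  have hdegX : (X : Polynomial F2c).natDegree < (X ^ q : Polynomial F2c).natDegree := by
    rw [natDegree_X, natDegree_X_pow]; omega
  have hPdeg : P.natDegree = q := by
    rw [hP, natDegree_sub_eq_left_of_natDegree_lt hdegX, natDegree_X_pow]
  have hP0 : P ≠ 0 := by
    intro h
    rw [h, natDegree_zero] at hPdeg; omega
  have hsub : {x : F2c | x ^ q = x} ⊆ ↑(P.roots.toFinset) := by
    intro x hx
    simp only [Set.mem_setOf_eq] at hx
    simp only [Finset.mem_coe, Multiset.mem_toFinset]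
    rw [mem_roots hP0]
    simp [hP, IsRoot, hx]
  constructor
  · exact Set.Finite.subset (P.roots.toFinset : Finset F2c).finite_toSet hsub
  · calc ({x : F2c | x ^ q = x}).ncard ≤ (P.roots.toFinset : Finset F2c).card := by
          simpa using Set.ncard_le_ncard hsub (P.roots.toFinset : Finset F2c).finite_toSet
    _ ≤ Multiset.card P.roots := Multiset.toFinset_card_le _
    _ ≤ P.natDegree := P.card_roots'
    _ = q := hPdeg

lemma pow_stab {x : F2c} {m : ℕ} (h : x ^ 2 ^ 2 ^ m = x) :
    ∀ t, m ≤ t → x ^ 2 ^ 2 ^ t = x := by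
  intro t ht
  induction t, ht using Nat.le_induction with
  | base => exact h
  | succ t ht ih =>
    have harith : (2:ℕ) ^ 2 ^ (t + 1) = 2 ^ 2 ^ t * 2 ^ 2 ^ t := by
      rw [← pow_add]
      congr 1
      rw [pow_succ]; ring
    rw [harith, pow_mul, ih, ih]



variable {c : ℕ → F2c}

theorem tower (hq : ∀ n, c n ^ 2 + c n + b c n = 0) (hn : ∀ n, c n ∉ conwayL c n) :
    ∀ n : ℕ, Nat.card (conwayL c n) = 2 ^ 2 ^ n
      ∧ (conwayL c n : Set F2c) = {x : F2c | x ^ 2 ^ 2 ^ n = x}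
      ∧ c n ^ 2 ^ 2 ^ n = c n + 1 := by
  intro n
  induction n using Nat.strong_induction_on with
  | _ n IH =>
  -- Step 1: cardinality
  have hcard : Nat.card (conwayL c n) = 2 ^ 2 ^ n := by
    match n with
    | 0 =>
      have himg : c '' Set.Iio 0 = ∅ := by
        have : Set.Iio 0 = (∅ : Set ℕ) := by ext t; simp
        rw [this, Set.image_empty]
      have h0 : conwayL c 0 = ⊥ := by
        rw [conwayL, himg, IntermediateField.adjoin_empty]
      rw [h0]
      rw [Nat.card_congr (IntermediateField.botEquiv (ZMod 2) F2c).toEquiv, Nat.card_zmod]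
      norm_num
    | (m + 1) =>
      obtain ⟨hcm, hsm, hfm⟩ := IH m (Nat.lt_succ_self m)
      set K := conwayL c m with hK
      have hKfin : Finite K := by
        refine Nat.finite_of_card_ne_zero ?_
        rw [hcm]; positivity
      have hbK : b c m ∈ K := by
        refine prod_mem fun t ht => ?_
        exact IntermediateField.subset_adjoin _ _
          ⟨t, by simpa using Finset.mem_range.mp ht, rfl⟩
      set x := c m with hx
      have hxK : x ∉ K := hn m
      set P : Polynomial K := X ^ 2 + (X + C (⟨b c m, hbK⟩ : K)) with hP
      have hmonic : P.Monic := by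
        refine monic_X_pow_add ?_
        rw [degree_X_add_C]
        norm_num
      have heval : Polynomial.aeval x P = 0 := by
        rw [hP]
        simp only [map_add, map_pow, aeval_X, aeval_C]
        have : (algebraMap K F2c) (⟨b c m, hbK⟩ : K) = b c m := rfl
        rw [this, ← add_assoc]
        exact hq m
      have hint : IsIntegral K x := ⟨P, hmonic, by rwa [← aeval_def]⟩
      have hdeg : (minpoly K x).natDegree = 2 := by
        refine le_antisymm ?_ ?_
        · calc (minpoly K x).natDegree ≤ P.natDegree :=
                natDegree_le_natDegree (minpoly.min K x hmonic heval)
          _ ≤ 2 := by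
              refine le_trans (natDegree_add_le _ _) ?_
              simp only [natDegree_X_pow]
              refine max_le le_rfl ?_
              rw [natDegree_X_add_C]
              norm_num
        · refine (minpoly.two_le_natDegree_iff hint).mpr ?_
          rintro ⟨y, hy⟩
          exact hxK (by rw [← hy]; exact y.2)
      have hfd : FiniteDimensional K K⟮x⟯ := IntermediateField.adjoin.finiteDimensional hint
      have hfr : Module.finrank K K⟮x⟯ = 2 := by
        rw [IntermediateField.adjoin.finrank hint, hdeg]
      have hfin2 : Finite K⟮x⟯ := Module.finite_of_finite K
      have hcard2 : Nat.card K⟮x⟯ = Nat.card K ^ 2 := by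
        letI : Fintype K := Fintype.ofFinite K
        letI : Fintype K⟮x⟯ := Fintype.ofFinite K⟮x⟯
        rw [Nat.card_eq_fintype_card, Nat.card_eq_fintype_card,
          Module.card_eq_pow_finrank (K := K) (V := K⟮x⟯), hfr]
      have himg : c '' Set.Iio (m + 1) = (c '' Set.Iio m) ∪ {c m} := by
        have : Set.Iio (m + 1) = Set.Iio m ∪ {m} := by
          ext t; simp only [Set.mem_Iio, Set.mem_union, Set.mem_singleton_iff]; omega
        rw [this, Set.image_union, Set.image_singleton]
      have htop : conwayL c (m + 1) =
          IntermediateField.restrictScalars (ZMod 2) (IntermediateField.adjoin K {x}) := by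
        rw [conwayL, himg, ← IntermediateField.adjoin_adjoin_left]
        rfl
      have hcast : Nat.card (conwayL c (m + 1)) = Nat.card K⟮x⟯ := by
        rw [htop]
        exact Nat.card_congr (Equiv.refl _)
      rw [hcast, hcard2, hcm, ← pow_mul, ← pow_succ]
  -- Step 2: set description
  have hset : (conwayL c n : Set F2c) = {x : F2c | x ^ 2 ^ 2 ^ n = x} := by
    have hsub1 : conwayL c n ≤ rootsIF n := by
      rw [conwayL, IntermediateField.adjoin_le_iff]
      rintro y ⟨j, hj, rfl⟩
      simp only [Set.mem_Iio] at hj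
      have hfj := (IH j hj).2.2
      have hstab : c j ^ 2 ^ 2 ^ (j + 1) = c j := by
        have harith : (2:ℕ) ^ 2 ^ (j + 1) = 2 ^ 2 ^ j * 2 ^ 2 ^ j := by
          rw [← pow_add]; congr 1; rw [pow_succ]; ring
        rw [harith, pow_mul, hfj, add_pow_char_pow, hfj, one_pow, add_assoc]
        have : (1 : F2c) + 1 = 0 := by
          have := two_eq_zero; linear_combination this
        rw [this, add_zero]
      exact mem_rootsIF.mpr (pow_stab hstab n hj)
    obtain ⟨hfinset, hncard⟩ := rootsSet_finite n
    refine Set.eq_of_subset_of_ncard_le hsub1 ?_ hfinset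
    calc ({x : F2c | x ^ 2 ^ 2 ^ n = x}).ncard ≤ 2 ^ 2 ^ n := hncard
    _ = Nat.card (conwayL c n) := hcard.symm
    _ = (conwayL c n : Set F2c).ncard := Nat.card_coe_set_eq _
  refine ⟨hcard, hset, ?_⟩
  -- Step 3: Frobenius action on c n
  have hmem_iff : ∀ y : F2c, y ∈ conwayL c n ↔ y ^ 2 ^ 2 ^ n = y := by
    intro y
    constructor
    · intro hy
      have : y ∈ (conwayL c n : Set F2c) := hy
      rw [hset] at this; exact this
    · intro hy
      have : y ∈ ({x : F2c | x ^ 2 ^ 2 ^ n = x} : Set F2c) := hy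
      rw [← hset] at this; exact this
  have hbL : b c n ∈ conwayL c n := by
    refine prod_mem fun t ht => ?_
    exact IntermediateField.subset_adjoin _ _ ⟨t, by simpa using Finset.mem_range.mp ht, rfl⟩
  have hbpow : (b c n) ^ 2 ^ 2 ^ n = b c n := (hmem_iff _).mp hbL
  have h2 : (2 : F2c) = 0 := two_eq_zero
  have hquad : c n ^ 2 + c n = b c n := by linear_combination hq n - b c n * h2
  set y := c n ^ 2 ^ 2 ^ n with hy
  have hykey : y ^ 2 + y = b c n := by
    have : y ^ 2 + y = (c n ^ 2 + c n) ^ 2 ^ 2 ^ n := by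
      rw [add_pow_char_pow, hy, ← pow_mul, ← pow_mul, mul_comm]
    rw [this, hquad, hbpow]
  set z := y + c n with hz
  have hzz : z * (z + 1) = 0 := by
    have hsq : z ^ 2 + z = 0 := by
      have : z ^ 2 + z = (y ^ 2 + y) + (c n ^ 2 + c n) := by
        rw [hz]; ring_nf; linear_combination (y * c n) * h2
      rw [this, hykey, hquad]
      linear_combination b c n * h2
    linear_combination hsq
  rcases mul_eq_zero.mp hzz with h0 | h1
  · exfalso
    have : y = c n := by linear_combination h0 - c n * h2
    exact hn n ((hmem_iff (c n)).mpr (by rw [← hy, this]))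
  · linear_combination h1 - (c n + 1) * h2


section Derived

variable (hq : ∀ n, c n ^ 2 + c n + b c n = 0) (hn : ∀ n, c n ∉ conwayL c n)
include hq

lemma b_ne_zero : ∀ n, b c n ≠ 0 := by
  intro n
  induction n with
  | zero => simp [b]
  | succ m ih =>
    have hc : c m ≠ 0 := by
      intro h0
      apply ih
      have := hq m
      rw [h0] at this
      simpa using this
    rw [b, Finset.prod_range_succ, ← b]
    exact mul_ne_zero ih hc

lemma c_ne_zero : ∀ n, c n ≠ 0 := by
  intro n h0
  apply b_ne_zero hq n
  have := hq n
  rw [h0] at this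
  simpa using this

omit hq in
lemma b_succ (n : ℕ) : b c (n + 1) = b c n * c n := Finset.prod_range_succ _ _

include hn

lemma mem_L_iff_pow (n : ℕ) (x : F2c) : x ∈ conwayL c n ↔ x ^ 2 ^ 2 ^ n = x := by
  have hset := (tower hq hn n).2.1
  constructor
  · intro hx
    have : x ∈ (conwayL c n : Set F2c) := hx
    rw [hset] at this
    exact this
  · intro hx
    have : x ∈ ({y : F2c | y ^ 2 ^ 2 ^ n = y} : Set F2c) := hx
    rw [← hset] at this
    exact this

lemma frob_c (n : ℕ) : c n ^ 2 ^ 2 ^ n = c n + 1 := (tower hq hn n).2.2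

lemma cN_eq_b (n : ℕ) : c n ^ fermatN n = b c n := by
  have h2 : (2 : F2c) = 0 := two_eq_zero
  rw [fermatN, pow_succ, frob_c hq hn]
  linear_combination hq n - b c n * h2

lemma pow_W_eq_one {n : ℕ} {x : F2c} (hx : x ∈ conwayL c n) (hx0 : x ≠ 0) :
    x ^ W n = 1 := by
  have h1 : x ^ (W n + 1) = x := by rw [W_add_one]; exact (mem_L_iff_pow hq hn n x).mp hx
  have h2 : x ^ W n * x = 1 * x := by rw [one_mul, ← pow_succ]; exact h1
  exact mul_right_cancel₀ hx0 h2

lemma mem_of_pow_W {n : ℕ} {x : F2c} (hx : x ^ W n = 1) : x ∈ conwayL c n := by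
  rw [mem_L_iff_pow hq hn, ← W_add_one, pow_succ, hx, one_mul]

omit hn

omit hq in
lemma gen_mem {j n : ℕ} (h : j < n) : c j ∈ conwayL c n :=
  IntermediateField.subset_adjoin _ _ ⟨j, h, rfl⟩

omit hq in
lemma b_mem {j n : ℕ} (h : j ≤ n) : b c j ∈ conwayL c n := by
  refine prod_mem fun t ht => gen_mem (lt_of_lt_of_le (Finset.mem_range.mp ht) h)

end Derived

-- R j k : product of fermat numbers over range (k+1) with j erased
noncomputable def Rjk (j k : ℕ) : ℕ := ∏ t ∈ (Finset.range (k + 1)).erase j, fermatN t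

lemma Rjk_self (j : ℕ) : Rjk j j = W j := by
  rw [Rjk, Finset.range_add_one, Finset.erase_insert (by simp), W]

lemma Rjk_step {j k : ℕ} (h : j ≤ k) : Rjk j (k + 1) = fermatN (k + 1) * Rjk j k := by
  rw [Rjk, Rjk, Finset.range_add_one (n := k + 1),
    Finset.erase_insert_of_ne (by omega : (k + 1 : ℕ) ≠ j)]
  rw [Finset.prod_insert (by simp)]

lemma fermat_mul_Rjk {j k : ℕ} (h : j ≤ k) : fermatN j * Rjk j k = W (k + 1) := by
  rw [Rjk, W, Finset.mul_prod_erase _ _ (Finset.mem_range.mpr (by omega))]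

lemma three_dvd_Rjk {j k : ℕ} (hj : j ≠ 0) : 3 ∣ Rjk j k := by
  have h0 : (0 : ℕ) ∈ (Finset.range (k + 1)).erase j := by
    simp [Finset.mem_erase, Ne.symm hj]
  exact Finset.dvd_prod_of_mem _ h0

lemma not_three_dvd_Rjk0 (k : ℕ) : ¬ (3 ∣ Rjk 0 k) := by
  intro h
  obtain ⟨t, ht, hdvd⟩ := (Nat.prime_three).prime.exists_mem_finset_dvd h
  have ht0 : t ≠ 0 := (Finset.mem_erase.mp ht).1
  exact not_three_dvd_fermatN (by omega) hdvd

lemma ord_pow_dvd (x : F2c) (m : ℕ) : orderOf (x ^ m) ∣ orderOf x :=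
  orderOf_dvd_of_pow_eq_one (by rw [← pow_mul, mul_comm, pow_mul, pow_orderOf_eq_one, one_pow])

lemma prod_fermat_dvd {s : Finset ℕ} {n : ℕ} (h : ∀ j ∈ s, fermatN j ∣ n) :
    (∏ j ∈ s, fermatN j) ∣ n := by
  classical
  induction s using Finset.induction with
  | empty => simpa using one_dvd n
  | @insert a s ha ih =>
    rw [Finset.prod_insert ha]
    refine Nat.Coprime.mul_dvd_of_dvd_of_dvd ?_ (h a (Finset.mem_insert_self a s))
      (ih fun j hj => h j (Finset.mem_insert_of_mem hj))
    exact Nat.Coprime.prod_right fun t ht => coprime_fermatN (fun he => ha (he ▸ ht))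

end ConwayAux

open ConwayAux

/-- Let `i ≥ 5`, and suppose that for every `j` with `5 ≤ j ≤ i`, the Fermat
number `N_j` is the smallest positive integer `m` with `(c_j)^m ∈ L_{j−1}`
(here `conwayL c j` denotes `L_{j-1}`). Then `c_i · c_0` and `a_i · a_0`
(where `a_k = ∏_{j=0}^{k} c_j`, so `a_0 = c_0`) are primitive elements of
`L_i`: each has multiplicative order `∏_{j=0}^{i} N_j = 2^(2^(i+1)) − 1`. -/
theorem conway_primitive_of_minimal (c : ℕ → AlgebraicClosure (ZMod 2))
    (hc0 : c 0 ^ 2 + c 0 + 1 = 0)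
    (hrec : ∀ i : ℕ, c (i + 1) ^ 2 + c (i + 1) + ∏ j ∈ Finset.range (i + 1), c j = 0)
    (hnot : ∀ i : ℕ, c (i + 1) ∉ conwayL c (i + 1))
    (i : ℕ) (hi : 5 ≤ i)
    (hmin : ∀ j : ℕ, 5 ≤ j → j ≤ i →
      IsLeast {m : ℕ | 0 < m ∧ c j ^ m ∈ conwayL c j} (fermatN j)) :
    orderOf (c i * c 0) = ∏ j ∈ Finset.Icc 0 i, fermatN j ∧
    orderOf ((∏ j ∈ Finset.range (i + 1), c j) * c 0) = ∏ j ∈ Finset.Icc 0 i, fermatN j ∧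
    ∏ j ∈ Finset.Icc 0 i, fermatN j = 2 ^ 2 ^ (i + 1) - 1 := by
  have hq : ∀ n, c n ^ 2 + c n + b c n = 0 := by
    intro n
    cases n with
    | zero => simpa [b] using hc0
    | succ m => exact hrec m
  have h2 : (2 : F2c) = 0 := two_eq_zero
  have hc0ne : c 0 ≠ 0 := c_ne_zero hq 0
  have hc0ne1 : c 0 ≠ 1 := by
    intro h
    rw [h] at hc0
    exact (one_ne_zero : (1 : F2c) ≠ 0) (by linear_combination hc0 - h2)
  have hn : ∀ n, c n ∉ conwayL c n := by
    intro n
    cases n with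
    | zero =>
      intro hmem
      have h0 : conwayL c 0 = ⊥ := by
        have himg : c '' Set.Iio 0 = ∅ := by
          have he : Set.Iio 0 = (∅ : Set ℕ) := by ext t; simp
          rw [he, Set.image_empty]
        rw [conwayL, himg, IntermediateField.adjoin_empty]
      rw [h0, IntermediateField.mem_bot] at hmem
      obtain ⟨r, hr⟩ := hmem
      have hr01 : ∀ r : ZMod 2, r = 0 ∨ r = 1 := by decide
      rcases hr01 r with rfl | rfl
      · rw [map_zero] at hr; exact hc0ne hr.symm
      · rw [map_one] at hr; exact hc0ne1 hr.symm
    | succ m => exact hnot m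
  have hc0cube : c 0 ^ 3 = 1 := by linear_combination (c 0 - 1) * hc0
  haveI : Fact (Nat.Prime 3) := ⟨by norm_num⟩
  have hord0 : orderOf (c 0) = 3 := orderOf_eq_prime hc0cube hc0ne1
  have hc0pow : ∀ m : ℕ, 3 ∣ m → c 0 ^ m = 1 := fun m hm =>
    orderOf_dvd_iff_pow_eq_one.mp (by rw [hord0]; exact hm)
  -- key per-level order fact
  have horder : ∀ j, 1 ≤ j → j ≤ i → orderOf (c j ^ W j) = fermatN j := by
    intro j h1 hij
    have hbLj : b c j ∈ conwayL c j := b_mem le_rfl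
    have hbne : b c j ≠ 0 := b_ne_zero hq j
    have hNpow : (c j ^ W j) ^ fermatN j = 1 := by
      rw [← pow_mul, mul_comm, pow_mul, cN_eq_b hq hn]
      exact pow_W_eq_one hq hn hbLj hbne
    have htdvd : orderOf (c j ^ W j) ∣ fermatN j := orderOf_dvd_of_pow_eq_one hNpow
    have hNne : fermatN j ≠ 0 := (fermatN_pos j).ne'
    have ht0 : 0 < orderOf (c j ^ W j) :=
      Nat.pos_of_ne_zero fun h => hNne (Nat.eq_zero_of_zero_dvd (h ▸ htdvd))
    have hmemt : c j ^ orderOf (c j ^ W j) ∈ conwayL c j := by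
      apply mem_of_pow_W hq hn
      rw [← pow_mul, mul_comm, pow_mul]
      exact pow_orderOf_eq_one _
    rcases le_or_gt 5 j with h5 | h5
    · have hle : fermatN j ≤ orderOf (c j ^ W j) := (hmin j h5 hij).2 ⟨ht0, hmemt⟩
      exact le_antisymm (Nat.le_of_dvd (fermatN_pos j) htdvd) hle
    · have hprime : Nat.Prime (fermatN j) := by
        interval_cases j <;> norm_num [fermatN]
      rcases hprime.eq_one_or_self_of_dvd _ htdvd with h1' | h'
      · exact absurd (mem_of_pow_W hq hn (orderOf_eq_one_iff.mp h1')) (hn j)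
      · exact h'
  -- the basic step identity
  have hstep : ∀ j k, j ≤ k → b c (k + 2) ^ Rjk j (k + 1)
      = (b c (k + 1) ^ Rjk j k) ^ (fermatN (k + 1) + 1) := by
    intro j k hjk
    rw [Rjk_step hjk, pow_mul, b_succ, mul_pow, cN_eq_b hq hn, ← pow_succ]
    exact pow_right_comm _ _ _
  have hP : ∀ j, 1 ≤ j → j ≤ i → ∀ k, j ≤ k →
      orderOf (b c (k + 1) ^ Rjk j k) = fermatN j := by
    intro j h1 hji k hjk
    induction k, hjk using Nat.le_induction with
    | base =>
      rw [Rjk_self, b_succ, mul_pow, pow_W_eq_one hq hn (b_mem le_rfl) (b_ne_zero hq j),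
        one_mul]
      exact horder j h1 hji
    | succ k hk ih =>
      rw [hstep j k hk, orderOf_pow' _ (by positivity), ih,
        coprime_fermatN_add_one h1 (by omega), Nat.div_one]
  have hA3 : ∀ k, 1 ≤ k → b c (k + 1) ^ Rjk 0 k = 1 := by
    intro k hk
    induction k, hk using Nat.le_induction with
    | base =>
      have hR : Rjk 0 1 = fermatN 1 := by
        rw [Rjk]
        have he : (Finset.range 2).erase 0 = {1} := by decide
        rw [he, Finset.prod_singleton]
      have hb1 : b c 1 = c 0 := by rw [b_succ]; simp [b]
      have hb2 : b c 2 = c 0 * c 1 := by rw [b_succ, hb1]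
      rw [hR, hb2, mul_pow, cN_eq_b hq hn, hb1, ← pow_succ]
      exact hc0pow _ (by norm_num [fermatN])
    | succ k hk ih =>
      rw [hstep 0 k (by omega), ih, one_pow]
  have hcomp : ∀ (x : F2c) (j : ℕ),
      orderOf (x ^ Rjk j i) = fermatN j → fermatN j ∣ orderOf x := by
    intro x j h
    rw [← h]; exact ord_pow_dvd x _
  obtain ⟨m, hm⟩ : ∃ m, i = m + 1 := ⟨i - 1, by omega⟩
  have hf03 : fermatN 0 = 3 := by norm_num [fermatN]
  have h3W : (3:ℕ) ∣ W i := by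
    have h := Finset.dvd_prod_of_mem fermatN (Finset.mem_range.mpr (show (0:ℕ) < i by omega))
    rwa [hf03] at h
  -- order-3 component helper
  have hordR0 : ∀ (x : F2c), x ^ Rjk 0 i = c 0 ^ Rjk 0 i → fermatN 0 ∣ orderOf x := by
    intro x hxE
    apply hcomp x 0
    rw [hxE, hf03]
    refine orderOf_eq_prime ?_ ?_
    · rw [← pow_mul, mul_comm, pow_mul, hc0cube, one_pow]
    · intro h1
      exact not_three_dvd_Rjk0 i (by
        rw [← hord0]
        exact orderOf_dvd_iff_pow_eq_one.mpr h1)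
  -- components for x = c i * c 0
  have hxcomp : ∀ j ≤ i, fermatN j ∣ orderOf (c i * c 0) := by
    intro j hj
    rcases Nat.eq_zero_or_pos j with rfl | hj1
    · refine hordR0 _ ?_
      rw [mul_pow]
      have hci : c i ^ Rjk 0 i = 1 := by
        rw [hm, Rjk_step (by omega : (0:ℕ) ≤ m), pow_mul, cN_eq_b hq hn]
        exact hA3 m (by omega)
      rw [hci, one_mul]
    · rcases eq_or_lt_of_le hj with rfl | hlt
      · apply hcomp _ j
        rw [Rjk_self, mul_pow, hc0pow (W j) h3W, mul_one]
        exact horder j hj1 le_rfl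
      · apply hcomp _ j
        have hxj : (c i * c 0) ^ Rjk j i = b c (m + 1) ^ Rjk j m := by
          rw [mul_pow, hc0pow _ (three_dvd_Rjk (by omega)), mul_one, hm,
            Rjk_step (by omega : j ≤ m), pow_mul, cN_eq_b hq hn]
        rw [hxj]
        exact hP j hj1 (by omega) m (by omega)
  -- components for w = b c (i+1) * c 0
  have hwcomp : ∀ j ≤ i, fermatN j ∣ orderOf (b c (i + 1) * c 0) := by
    intro j hj
    rcases Nat.eq_zero_or_pos j with rfl | hj1
    · refine hordR0 _ ?_
      rw [mul_pow, hA3 i (by omega), one_mul]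
    · apply hcomp _ j
      have hwj : (b c (i + 1) * c 0) ^ Rjk j i = b c (i + 1) ^ Rjk j i := by
        rw [mul_pow, hc0pow _ (three_dvd_Rjk (by omega)), mul_one]
      rw [hwj]
      exact hP j hj1 hj i hj
  -- assembly
  have hxmem : c i * c 0 ∈ conwayL c (i + 1) :=
    mul_mem (gen_mem (by omega)) (gen_mem (by omega))
  have hwmem : b c (i + 1) * c 0 ∈ conwayL c (i + 1) :=
    mul_mem (b_mem (by omega)) (gen_mem (by omega))
  have hxne : c i * c 0 ≠ 0 := mul_ne_zero (c_ne_zero hq i) hc0ne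
  have hwne : b c (i + 1) * c 0 ≠ 0 := mul_ne_zero (b_ne_zero hq (i + 1)) hc0ne
  have hxQ : orderOf (c i * c 0) ∣ W (i + 1) :=
    orderOf_dvd_of_pow_eq_one (pow_W_eq_one hq hn hxmem hxne)
  have hwQ : orderOf (b c (i + 1) * c 0) ∣ W (i + 1) :=
    orderOf_dvd_of_pow_eq_one (pow_W_eq_one hq hn hwmem hwne)
  have hIcc : ∏ j ∈ Finset.Icc 0 i, fermatN j = W (i + 1) := by
    rw [W]
    apply Finset.prod_congr _ (fun _ _ => rfl)
    ext t; simp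
  have hxord : orderOf (c i * c 0) = W (i + 1) := by
    refine Nat.dvd_antisymm hxQ ?_
    rw [W]
    exact prod_fermat_dvd fun j hj => hxcomp j (by
      have := Finset.mem_range.mp hj; omega)
  have hword : orderOf (b c (i + 1) * c 0) = W (i + 1) := by
    refine Nat.dvd_antisymm hwQ ?_
    rw [W]
    exact prod_fermat_dvd fun j hj => hwcomp j (by
      have := Finset.mem_range.mp hj; omega)
  refine ⟨by rw [hIcc]; exact hxord, by rw [hIcc]; exact hword, ?_⟩
  rw [hIcc]
  have := W_add_one (i + 1)
  omega
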